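/- Let Λ be a nonempty finite set of hyperparameters with m = |Λ|, let α, δ ∈ (0,1), and let (Ω, F, P) be a probability space modeling the calibration data. For each λ ∈ Λ, let R(λ) ∈ [0,1] be the (deterministic) average risk of λ, and let p_λ : Ω → [0,1] be a measurable random variable that is superuniform whenever R(λ) > α, i.e., if R(λ) > α then P[ p_λ ≤ u ] ≤ u for all u ∈ [0,1]. Define Λ̂(ω) = { λ ∈ Λ : p_λ(ω) < δ/m }. Then P[ R(λ̂) ≤ α for all λ̂ ∈ Λ̂ ] ≥ 1 − δ. -/
import Mathlib


open MeasureTheory Set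

/-- **LTT reliability guarantee with the Bonferroni correction (abstract version).**
If for every `λ` with average risk `R(λ) > α` the p-value `p_λ` is superuniform, then
the Bonferroni selection `Λ̂ = {λ : p_λ < δ/m}` contains only reliable hyperparameters
(`R(λ̂) ≤ α` for all `λ̂ ∈ Λ̂`) with probability at least `1 - δ`. -/
theorem ltt_bonferroni_guarantee
    {Ω : Type*} [MeasurableSpace Ω] (P : Measure Ω) [IsProbabilityMeasure P]
    {Λ : Type*} [Fintype Λ] [Nonempty Λ]
    (m : ℕ) (hm : m = Fintype.card Λ)
    (α δ : ℝ) (hα : α ∈ Set.Ioo (0 : ℝ) 1) (hδ : δ ∈ Set.Ioo (0 : ℝ) 1)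
    (Risk : Λ → ℝ) (hRisk : ∀ lam, Risk lam ∈ Set.Icc (0 : ℝ) 1)
    (p : Λ → Ω → ℝ)
    (hmeas : ∀ lam, Measurable (p lam))
    (hrange : ∀ lam ω, p lam ω ∈ Set.Icc (0 : ℝ) 1)
    (hsuper : ∀ lam, Risk lam > α → ∀ u ∈ Set.Icc (0 : ℝ) 1,
      P {ω | p lam ω ≤ u} ≤ ENNReal.ofReal u)
    (Λhat : Ω → Set Λ)
    (hΛhat : Λhat = fun ω => {lam | p lam ω < δ / m}) :
    P {ω | ∀ lam ∈ Λhat ω, Risk lam ≤ α} ≥ ENNReal.ofReal (1 - δ) := by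
  obtain ⟨hδ0, hδ1⟩ := hδ
  have hm1 : 1 ≤ m := by
    rw [hm]; exact Fintype.card_pos
  have hmR : (1 : ℝ) ≤ m := by exact_mod_cast hm1
  have hmpos : (0 : ℝ) < m := lt_of_lt_of_le one_pos hmR
  -- the "bad" event
  set B : Λ → Set Ω := fun lam => {ω | α < Risk lam ∧ p lam ω ≤ δ / m} with hB
  have hu : δ / m ∈ Set.Icc (0 : ℝ) 1 := by
    constructor
    · positivity
    · calc δ / m ≤ δ / 1 := by
            apply div_le_div_of_nonneg_left hδ0.le one_pos hmR
        _ ≤ 1 := by linarith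
  have hBmeas : ∀ lam, MeasurableSet (B lam) := by
    intro lam
    by_cases h : α < Risk lam
    · have : B lam = {ω | p lam ω ≤ δ / m} := by
        ext ω; simp [hB, h]
      rw [this]
      exact (hmeas lam) measurableSet_Iic
    · have : B lam = ∅ := by
        ext ω; simp [hB, h]
      simp [this]
  have hBle : ∀ lam, P (B lam) ≤ ENNReal.ofReal (δ / m) := by
    intro lam
    by_cases h : α < Risk lam
    · have : B lam ⊆ {ω | p lam ω ≤ δ / m} := fun ω hω => hω.2
      exact le_trans (measure_mono this) (hsuper lam h _ hu)
    · have : B lam = ∅ := by ext ω; simp [hB, h]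
      simp [this]
  have hUnion : P (⋃ lam, B lam) ≤ ENNReal.ofReal δ := by
    calc P (⋃ lam, B lam) ≤ ∑ lam : Λ, P (B lam) := measure_iUnion_fintype_le P B
      _ ≤ ∑ _lam : Λ, ENNReal.ofReal (δ / m) := Finset.sum_le_sum fun lam _ => hBle lam
      _ = (Fintype.card Λ : ℕ) * ENNReal.ofReal (δ / m) := by
          rw [Finset.sum_const, Finset.card_univ, nsmul_eq_mul]
      _ = ENNReal.ofReal δ := by
          rw [← hm, ← ENNReal.ofReal_natCast, ← ENNReal.ofReal_mul (by positivity)]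
          congr 1
          field_simp
  -- the good event contains the complement of the bad event
  have hsub : (⋃ lam, B lam)ᶜ ⊆ {ω | ∀ lam ∈ Λhat ω, Risk lam ≤ α} := by
    intro ω hω lam hlam
    by_contra hc
    push_neg at hc
    apply hω
    refine Set.mem_iUnion.mpr ⟨lam, hc, ?_⟩
    rw [hΛhat] at hlam
    exact le_of_lt hlam
  calc ENNReal.ofReal (1 - δ)
      = 1 - ENNReal.ofReal δ := by
        rw [← ENNReal.ofReal_one, ← ENNReal.ofReal_sub _ hδ0.le]
    _ ≤ 1 - P (⋃ lam, B lam) := tsub_le_tsub_left hUnion 1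
    _ = P ((⋃ lam, B lam)ᶜ) := by
        rw [measure_compl (MeasurableSet.iUnion hBmeas) (measure_ne_top P _), measure_univ]
    _ ≤ P {ω | ∀ lam ∈ Λhat ω, Risk lam ≤ α} := measure_mono hsub
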